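/- In the feedback network built from a tree concept hierarchy with max level L and threshold τ = rk: if B is presented at all times ≥ t, then every concept c ∈ supp_{r,f}(B) has rep(c) fire at some time ≤ t + 2L. -/
import Mathlib


open scoped Classical
noncomputable section

/-- A concept hierarchy: concepts at levels `0..L`, each concept at level `≥ 1`
has exactly `k` children one level below, level-0 concepts have no children,
there are exactly `k` top-level concepts, and every non-top concept has a parent. -/
structure ConceptHierarchy (α : Type) [DecidableEq α] where
  L : ℕ
  k : ℕ
  concepts : Finset α
  level : α → ℕ
  children : α → Finset α
  level_le : ∀ c ∈ concepts, level c ≤ L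
  children_mem : ∀ c ∈ concepts, ∀ c' ∈ children c, c' ∈ concepts
  children_level : ∀ c ∈ concepts, ∀ c' ∈ children c, level c' + 1 = level c
  children_card : ∀ c ∈ concepts, 1 ≤ level c → (children c).card = k
  children_leaf : ∀ c ∈ concepts, level c = 0 → children c = ∅
  top_card : (concepts.filter (fun c => level c = L)).card = k
  has_parent : ∀ c ∈ concepts, level c < L → ∃ c' ∈ concepts, c ∈ children c'

namespace ConceptHierarchy

variable {α : Type} [DecidableEq α]

/-- The parents of a concept. -/
def parents (H : ConceptHierarchy α) (c : α) : Finset α :=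
  H.concepts.filter (fun c' => c ∈ H.children c')

/-- Limited overlap: each concept at level `≥ 1` shares at most `o·k` children
with the union of the other concepts at the same level. -/
def LimitedOverlap (H : ConceptHierarchy α) (o : ℝ) : Prop :=
  ∀ c ∈ H.concepts, 1 ≤ H.level c →
    (((H.children c).filter (fun d => ∃ c' ∈ H.concepts, c' ≠ c ∧
        H.level c' = H.level c ∧ d ∈ H.children c')).card : ℝ) ≤ o * H.k

/-- Tree hierarchy: no overlap among child sets of distinct same-level concepts. -/
def IsTree (H : ConceptHierarchy α) : Prop :=
  ∀ c ∈ H.concepts, ∀ c' ∈ H.concepts, H.level c = H.level c' → c ≠ c' →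
    Disjoint (H.children c) (H.children c')

/-- Descendant relation: reflexive-transitive closure of the children relation. -/
inductive Desc (H : ConceptHierarchy α) : α → α → Prop
  | refl (c : α) : Desc H c c
  | step {c d e : α} : d ∈ H.children c → Desc H d e → Desc H c e

/-- The level-0 descendants of a concept. -/
def leaves (H : ConceptHierarchy α) (c : α) : Finset α :=
  H.concepts.filter (fun d => H.Desc c d ∧ H.level d = 0)

/-- Level-indexed bottom-up support sets: `S(0) = B ∩ C₀`,
`S(ℓ) = {c at level ℓ : |children(c) ∩ S(ℓ-1)| ≥ r·k}`. -/
def suppL (H : ConceptHierarchy α) (r : ℝ) (B : Finset α) : ℕ → Finset α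
  | 0 => B ∩ H.concepts.filter (fun c => H.level c = 0)
  | (ℓ+1) => H.concepts.filter (fun c => H.level c = ℓ + 1 ∧
      r * H.k ≤ ((H.children c ∩ suppL H r B ℓ).card : ℝ))

/-- `supp_r(B) = ⋃_ℓ S(ℓ)`. -/
def supp (H : ConceptHierarchy α) (r : ℝ) (B : Finset α) : Set α :=
  ⋃ ℓ, ↑(H.suppL r B ℓ)

/-- Time-and-level-indexed support sets with feedback strength `f`:
`S(0,t) = B`; `S(ℓ,0) = ∅` for `ℓ ≥ 1`; and
`S(ℓ,t) = S(ℓ,t-1) ∪ {c at level ℓ : |children(c) ∩ S(ℓ-1,t-1)| + f·|parents(c) ∩ S(ℓ+1,t-1)| ≥ r·k}`. -/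
def suppFB (H : ConceptHierarchy α) (r f : ℝ) (B : Finset α) : ℕ → ℕ → Finset α
  | 0, _ => B
  | (_+1), 0 => ∅
  | (ℓ+1), (t+1) => suppFB H r f B (ℓ+1) t ∪
      H.concepts.filter (fun c => H.level c = ℓ + 1 ∧
        r * H.k ≤ ((H.children c ∩ suppFB H r f B ℓ t).card : ℝ) +
          f * ((H.parents c ∩ suppFB H r f B (ℓ+2) t).card : ℝ))
  termination_by ℓ t => t

/-- `supp_{r,f}(B,*,t) = ⋃_ℓ S(ℓ,t)`. -/
def suppFBatTime (H : ConceptHierarchy α) (r f : ℝ) (B : Finset α) (t : ℕ) : Set α :=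
  ⋃ ℓ, ↑(H.suppFB r f B ℓ t)

/-- `supp_{r,f}(B) = ⋃_{ℓ,t} S(ℓ,t)`. -/
def suppFBSet (H : ConceptHierarchy α) (r f : ℝ) (B : Finset α) : Set α :=
  ⋃ t, H.suppFBatTime r f B t

end ConceptHierarchy

/-- Feed-forward 0/1 weights: weight 1 from the rep of a child to the rep of its
parent, weight 0 otherwise. -/
def ffWeight {α ν : Type} [DecidableEq α] (H : ConceptHierarchy α) (rep : α → ν)
    (u v : ν) : ℝ :=
  if ∃ c ∈ H.concepts, ∃ c' ∈ H.children c, u = rep c' ∧ v = rep c then 1 else 0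

/-- Feedback-network weights: weight 1 upward (rep of child to rep of parent),
weight `f` downward (rep of parent to rep of child), 0 otherwise. -/
def fbWeight {α ν : Type} [DecidableEq α] (H : ConceptHierarchy α) (rep : α → ν)
    (f : ℝ) (u v : ν) : ℝ :=
  if ∃ c ∈ H.concepts, ∃ c' ∈ H.children c, u = rep c' ∧ v = rep c then 1
  else if ∃ c ∈ H.concepts, ∃ c' ∈ H.children c, u = rep c ∧ v = rep c' then f
  else 0

namespace ConceptHierarchy

variable {α : Type} [DecidableEq α] (H : ConceptHierarchy α) (r f : ℝ) (B : Finset α)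

lemma suppFB_zero (t : ℕ) : H.suppFB r f B 0 t = B := by
  cases t <;> simp [suppFB]

lemma suppFB_succ_zero (ℓ : ℕ) : H.suppFB r f B (ℓ+1) 0 = ∅ := by
  simp [suppFB]

lemma suppFB_succ_succ (ℓ t : ℕ) : H.suppFB r f B (ℓ+1) (t+1) =
    H.suppFB r f B (ℓ+1) t ∪
      H.concepts.filter (fun c => H.level c = ℓ + 1 ∧
        r * H.k ≤ ((H.children c ∩ H.suppFB r f B ℓ t).card : ℝ) +
          f * ((H.parents c ∩ H.suppFB r f B (ℓ+2) t).card : ℝ)) := by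
  rw [suppFB]

lemma suppFB_mono (ℓ : ℕ) : ∀ {s s' : ℕ}, s ≤ s' →
    H.suppFB r f B ℓ s ⊆ H.suppFB r f B ℓ s' := by
  intro s s' h
  induction h with
  | refl => exact Finset.Subset.refl _
  | step h ih =>
    refine ih.trans ?_
    rename_i s'' _
    cases ℓ with
    | zero => rw [suppFB_zero, suppFB_zero]
    | succ ℓ => rw [suppFB_succ_succ]; exact Finset.subset_union_left

lemma mem_suppFB_level {ℓ t : ℕ} {c : α} (h : c ∈ H.suppFB r f B (ℓ+1) t) :
    c ∈ H.concepts ∧ H.level c = ℓ + 1 := by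
  induction t with
  | zero => simp [suppFB_succ_zero] at h
  | succ t ih =>
    rw [suppFB_succ_succ, Finset.mem_union] at h
    rcases h with h | h
    · exact ih h
    · have := Finset.mem_filter.mp h
      exact ⟨this.1, this.2.1⟩

end ConceptHierarchy
namespace ConceptHierarchy

variable {α : Type} [DecidableEq α] (H : ConceptHierarchy α) (r f : ℝ) (B : Finset α)

/-- Threshold characterization: membership at time `s+1` is equivalent to the
threshold condition at time `s` (counts are monotone in time). -/
lemma mem_suppFB_succ_iff (hf : 0 ≤ f) (ℓ : ℕ) (c : α) : ∀ s : ℕ,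
    c ∈ H.suppFB r f B (ℓ+1) (s+1) ↔ (c ∈ H.concepts ∧ H.level c = ℓ + 1 ∧
      r * H.k ≤ ((H.children c ∩ H.suppFB r f B ℓ s).card : ℝ) +
        f * ((H.parents c ∩ H.suppFB r f B (ℓ+2) s).card : ℝ)) := by
  intro s
  induction s with
  | zero =>
    rw [suppFB_succ_succ, Finset.mem_union, suppFB_succ_zero, Finset.mem_filter]
    simp
  | succ s ih =>
    rw [suppFB_succ_succ, Finset.mem_union, ih, Finset.mem_filter]
    constructor
    · rintro (⟨h1, h2, h3⟩ | ⟨h1, h2, h3⟩) <;> refine ⟨h1, h2, ?_⟩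
      · refine h3.trans (add_le_add ?_ ?_)
        · exact_mod_cast Nat.cast_le.mpr (Finset.card_le_card
            (Finset.inter_subset_inter_left (H.suppFB_mono r f B ℓ (Nat.le_succ s))))
        · exact mul_le_mul_of_nonneg_left (Nat.cast_le.mpr (Finset.card_le_card
            (Finset.inter_subset_inter_left (H.suppFB_mono r f B (ℓ+2) (Nat.le_succ s))))) hf
      · exact h3
    · exact fun h => Or.inr h

/-- With `hB`, the level-0 bottom-up support set is just `B`. -/
lemma suppL_zero_eq (hB : ∀ b ∈ B, b ∈ H.concepts ∧ H.level b = 0) :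
    H.suppL r B 0 = B := by
  ext b
  simp only [suppL, Finset.mem_inter, Finset.mem_filter]
  exact ⟨fun h => h.1, fun h => ⟨h, (hB b h).1, (hB b h).2⟩⟩

lemma mem_suppL_succ_iff (ℓ : ℕ) (c : α) :
    c ∈ H.suppL r B (ℓ+1) ↔ (c ∈ H.concepts ∧ H.level c = ℓ + 1 ∧
      r * H.k ≤ ((H.children c ∩ H.suppL r B ℓ).card : ℝ)) := by
  simp [suppL, Finset.mem_filter, and_assoc]

/-- The bottom-up support at level `ℓ` is reached by time `ℓ`. -/
lemma suppL_subset_suppFB (hf : 0 ≤ f) (hB : ∀ b ∈ B, b ∈ H.concepts ∧ H.level b = 0) :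
    ∀ ℓ : ℕ, H.suppL r B ℓ ⊆ H.suppFB r f B ℓ ℓ := by
  intro ℓ
  induction ℓ with
  | zero => rw [suppL_zero_eq H r B hB, suppFB_zero]
  | succ ℓ ih =>
    intro c hc
    rw [mem_suppL_succ_iff] at hc
    rw [mem_suppFB_succ_iff H r f B hf]
    refine ⟨hc.1, hc.2.1, hc.2.2.trans ?_⟩
    have h1 : ((H.children c ∩ H.suppL r B ℓ).card : ℝ) ≤
        ((H.children c ∩ H.suppFB r f B ℓ ℓ).card : ℝ) :=
      Nat.cast_le.mpr (Finset.card_le_card (Finset.inter_subset_inter_left ih))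
    have h2 : (0:ℝ) ≤ f * ((H.parents c ∩ H.suppFB r f B (ℓ+2) ℓ).card : ℝ) :=
      mul_nonneg hf (Nat.cast_nonneg _)
    linarith

end ConceptHierarchy
namespace ConceptHierarchy

variable {α : Type} [DecidableEq α] (H : ConceptHierarchy α) (r f : ℝ) (B : Finset α)

/-- Key tree lemma: any member of a time-indexed support set satisfies the
threshold with children counted in the *feed-forward* support set. -/
lemma suppFB_thresh (hTree : H.IsTree) (hf : 0 ≤ f)
    (hB : ∀ b ∈ B, b ∈ H.concepts ∧ H.level b = 0) :
    ∀ t : ℕ, ∀ ℓ : ℕ, ∀ c : α, c ∈ H.suppFB r f B (ℓ+1) t →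
      ∃ t' < t, r * H.k ≤ ((H.children c ∩ H.suppL r B ℓ).card : ℝ) +
        f * ((H.parents c ∩ H.suppFB r f B (ℓ+2) t').card : ℝ) := by
  intro t
  induction t using Nat.strong_induction_on with
  | _ t IH =>
    intro ℓ c hc
    match t with
    | 0 => simp [suppFB_succ_zero] at hc
    | (n+1) =>
      rw [suppFB_succ_succ, Finset.mem_union] at hc
      rcases hc with hc | hc
      · obtain ⟨t', ht', hle⟩ := IH n (Nat.lt_succ_self n) ℓ c hc
        exact ⟨t', ht'.trans (Nat.lt_succ_self n), hle⟩
      · rw [Finset.mem_filter] at hc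
        obtain ⟨hcC, hclev, hthr⟩ := hc
        match ℓ with
        | 0 =>
          refine ⟨n, Nat.lt_succ_self n, ?_⟩
          rw [show H.suppL r B 0 = H.suppFB r f B 0 n by
            rw [suppL_zero_eq H r B hB, suppFB_zero]]
          exact hthr
        | (m+1) =>
          by_cases hall : ∀ d ∈ H.children c ∩ H.suppFB r f B (m+1) n,
              d ∈ H.suppL r B (m+1)
          · refine ⟨n, Nat.lt_succ_self n, hthr.trans (add_le_add ?_ le_rfl)⟩
            refine Nat.cast_le.mpr (Finset.card_le_card ?_)
            intro d hd
            exact Finset.mem_inter.mpr ⟨(Finset.mem_inter.mp hd).1, hall d hd⟩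
          · push_neg at hall
            obtain ⟨d, hd, hdA⟩ := hall
            rw [Finset.mem_inter] at hd
            obtain ⟨td, htd, hdle⟩ := IH n (Nat.lt_succ_self n) m d hd.2
            by_cases hA : r * H.k ≤ ((H.children d ∩ H.suppL r B m).card : ℝ)
            · exact absurd ((mem_suppL_succ_iff H r B m d).mpr
                ⟨(H.mem_suppFB_level r f B hd.2).1,
                 (H.mem_suppFB_level r f B hd.2).2, hA⟩) hdA
            · have hpos : 0 < f * ((H.parents d ∩ H.suppFB r f B (m+2) td).card : ℝ) := by
                push_neg at hA; linarith
              have hne : (H.parents d ∩ H.suppFB r f B (m+2) td).Nonempty := by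
                rw [Finset.nonempty_iff_ne_empty]
                intro h
                rw [h] at hpos
                simp at hpos
              obtain ⟨p, hp⟩ := hne
              rw [Finset.mem_inter] at hp
              have hpP := Finset.mem_filter.mp hp.1
              have hplev := (H.mem_suppFB_level r f B hp.2).2
              have hpc : p = c := by
                by_contra hne'
                have := hTree p hpP.1 c hcC (by omega) hne'
                exact Finset.disjoint_left.mp this hpP.2 hd.1
              subst hpc
              obtain ⟨t', ht', hle⟩ := IH td (htd.trans (Nat.lt_succ_self n)) (m+1) p hp.2
              exact ⟨t', by omega, hle⟩

/-- Tree stabilization: membership in the support set at any time implies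
membership by time `2L − ℓ`. -/
lemma suppFB_stab (hTree : H.IsTree) (hf : 0 ≤ f)
    (hB : ∀ b ∈ B, b ∈ H.concepts ∧ H.level b = 0) :
    ∀ t : ℕ, ∀ ℓ : ℕ, ∀ c : α, c ∈ H.suppFB r f B (ℓ+1) t →
      c ∈ H.suppFB r f B (ℓ+1) (2 * H.L - (ℓ+1)) := by
  intro t
  induction t using Nat.strong_induction_on with
  | _ t IH =>
    intro ℓ c hc
    obtain ⟨t', ht', hle⟩ := H.suppFB_thresh r f B hTree hf hB t ℓ c hc
    have hmem := H.mem_suppFB_level r f B hc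
    have hℓL : ℓ + 1 ≤ H.L := hmem.2 ▸ H.level_le c hmem.1
    set m : ℕ := 2 * H.L - (ℓ + 2) with hm
    have h1 : H.children c ∩ H.suppL r B ℓ ⊆ H.children c ∩ H.suppFB r f B ℓ m := by
      refine Finset.inter_subset_inter_left ?_
      refine (H.suppL_subset_suppFB r f B hf hB ℓ).trans (H.suppFB_mono r f B ℓ ?_)
      omega
    have h2 : H.parents c ∩ H.suppFB r f B (ℓ+2) t' ⊆
        H.parents c ∩ H.suppFB r f B (ℓ+2) m := by
      intro p hp
      rw [Finset.mem_inter] at hp ⊢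
      exact ⟨hp.1, IH t' ht' (ℓ+1) p hp.2⟩
    have hthr : r * H.k ≤ ((H.children c ∩ H.suppFB r f B ℓ m).card : ℝ) +
        f * ((H.parents c ∩ H.suppFB r f B (ℓ+2) m).card : ℝ) := by
      refine hle.trans (add_le_add ?_ ?_)
      · exact Nat.cast_le.mpr (Finset.card_le_card h1)
      · exact mul_le_mul_of_nonneg_left (Nat.cast_le.mpr (Finset.card_le_card h2)) hf
    have : c ∈ H.suppFB r f B (ℓ+1) (m+1) :=
      (H.mem_suppFB_succ_iff r f B hf ℓ c m).mpr ⟨hmem.1, hmem.2, hthr⟩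
    have hmeq : m + 1 = 2 * H.L - (ℓ + 1) := by omega
    rwa [hmeq] at this

end ConceptHierarchy
lemma fbWeight_sum {α ν : Type} [DecidableEq α] [DecidableEq ν] [Fintype ν]
    (H : ConceptHierarchy α) (rep : α → ν) (layer : ν → ℕ)
    (hrep_inj : ∀ c ∈ H.concepts, ∀ c' ∈ H.concepts, rep c = rep c' → c = c')
    (hrep_layer : ∀ c ∈ H.concepts, layer (rep c) = H.level c)
    (f : ℝ) (P : ν → Prop) (c : α) (hc : c ∈ H.concepts) (ℓ : ℕ)
    (hlev : H.level c = ℓ + 1) (X Y : Finset α)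
    (hX : ∀ d ∈ H.children c, (P (rep d) ↔ d ∈ X))
    (hY : ∀ p ∈ H.parents c, (P (rep p) ↔ p ∈ Y)) :
    ∑ v ∈ Finset.univ.filter
        (fun v => (layer v + 1 = layer (rep c) ∨ layer v = layer (rep c) + 1) ∧ P v),
      fbWeight H rep f v (rep c)
    = ((H.children c ∩ X).card : ℝ) + f * ((H.parents c ∩ Y).card : ℝ) := by
  classical
  set Cimg := (H.children c).image rep with hCimg
  set Pimg := (H.parents c).image rep with hPimg
  -- children are concepts, parents are concepts
  have hchC : ∀ d ∈ H.children c, d ∈ H.concepts := fun d hd => H.children_mem c hc d hd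
  have hparC : ∀ p ∈ H.parents c, p ∈ H.concepts := fun p hp => (Finset.mem_filter.mp hp).1
  have hchlev : ∀ d ∈ H.children c, H.level d = ℓ := fun d hd => by
    have := H.children_level c hc d hd; omega
  have hparlev : ∀ p ∈ H.parents c, H.level p = ℓ + 2 := fun p hp => by
    have hp' := Finset.mem_filter.mp hp
    have := H.children_level p hp'.1 c hp'.2; omega
  -- characterize the two weight conditions
  have hcond1 : ∀ v : ν, (∃ c₀ ∈ H.concepts, ∃ c' ∈ H.children c₀,
      v = rep c' ∧ rep c = rep c₀) ↔ v ∈ Cimg := by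
    intro v
    constructor
    · rintro ⟨c₀, hc₀, c', hc', rfl, hr⟩
      have : c = c₀ := hrep_inj c hc c₀ hc₀ hr
      subst this
      exact Finset.mem_image_of_mem rep hc'
    · intro hv
      obtain ⟨d, hd, rfl⟩ := Finset.mem_image.mp hv
      exact ⟨c, hc, d, hd, rfl, rfl⟩
  have hcond2 : ∀ v : ν, (∃ c₀ ∈ H.concepts, ∃ c' ∈ H.children c₀,
      v = rep c₀ ∧ rep c = rep c') ↔ v ∈ Pimg := by
    intro v
    constructor
    · rintro ⟨c₀, hc₀, c', hc', rfl, hr⟩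
      have : c = c' := hrep_inj c hc c' (H.children_mem c₀ hc₀ c' hc') hr
      subst this
      exact Finset.mem_image_of_mem rep (Finset.mem_filter.mpr ⟨hc₀, hc'⟩)
    · intro hv
      obtain ⟨p, hp, rfl⟩ := Finset.mem_image.mp hv
      exact ⟨p, hparC p hp, c, (Finset.mem_filter.mp hp).2, rfl, rfl⟩
  have hdisj : ∀ v : ν, v ∈ Cimg → v ∈ Pimg → False := by
    intro v h1 h2
    obtain ⟨d, hd, rfl⟩ := Finset.mem_image.mp h1
    obtain ⟨p, hp, hpe⟩ := Finset.mem_image.mp h2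
    have : p = d := hrep_inj p (hparC p hp) d (hchC d hd) hpe
    subst this
    have := hchlev p hd
    have := hparlev p hp
    omega
  have hw : ∀ v : ν, fbWeight H rep f v (rep c) =
      (if v ∈ Cimg then (1:ℝ) else 0) + (if v ∈ Pimg then f else 0) := by
    intro v
    rw [fbWeight]
    by_cases h1 : v ∈ Cimg
    · rw [if_pos ((hcond1 v).mpr h1), if_pos h1, if_neg (fun h => hdisj v h1 h)]
      ring
    · rw [if_neg (fun h => h1 ((hcond1 v).mp h)), if_neg h1]
      by_cases h2 : v ∈ Pimg
      · rw [if_pos ((hcond2 v).mpr h2), if_pos h2]; ring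
      · rw [if_neg (fun h => h2 ((hcond2 v).mp h)), if_neg h2]; ring
  set F := Finset.univ.filter
      (fun v => (layer v + 1 = layer (rep c) ∨ layer v = layer (rep c) + 1) ∧ P v) with hF
  have hsplit : ∑ v ∈ F, fbWeight H rep f v (rep c) =
      ((F ∩ Cimg).card : ℝ) + f * ((F ∩ Pimg).card : ℝ) := by
    calc ∑ v ∈ F, fbWeight H rep f v (rep c)
        = ∑ v ∈ F, ((if v ∈ Cimg then (1:ℝ) else 0) + (if v ∈ Pimg then f else 0)) := by
          exact Finset.sum_congr rfl (fun v _ => hw v)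
      _ = (∑ v ∈ F, (if v ∈ Cimg then (1:ℝ) else 0)) +
          (∑ v ∈ F, (if v ∈ Pimg then f else 0)) := Finset.sum_add_distrib
      _ = ((F ∩ Cimg).card : ℝ) + f * ((F ∩ Pimg).card : ℝ) := by
          rw [Finset.sum_ite_mem, Finset.sum_ite_mem, Finset.sum_const, Finset.sum_const]
          simp [mul_comm]
  rw [hsplit]
  -- identify the two intersections as images
  have hCeq : F ∩ Cimg = (H.children c ∩ X).image rep := by
    ext v
    simp only [Finset.mem_inter, Finset.mem_image, hF, Finset.mem_filter,
      Finset.mem_univ, true_and, hCimg]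
    constructor
    · rintro ⟨⟨_, hPv⟩, d, hd, rfl⟩
      exact ⟨d, ⟨hd, (hX d hd).mp hPv⟩, rfl⟩
    · rintro ⟨d, ⟨hd, hdX⟩, rfl⟩
      refine ⟨⟨Or.inl ?_, (hX d hd).mpr hdX⟩, d, hd, rfl⟩
      rw [hrep_layer d (hchC d hd), hrep_layer c hc, hchlev d hd, hlev]
  have hPeq : F ∩ Pimg = (H.parents c ∩ Y).image rep := by
    ext v
    simp only [Finset.mem_inter, Finset.mem_image, hF, Finset.mem_filter,
      Finset.mem_univ, true_and, hPimg]
    constructor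
    · rintro ⟨⟨_, hPv⟩, p, hp, rfl⟩
      exact ⟨p, ⟨hp, (hY p hp).mp hPv⟩, rfl⟩
    · rintro ⟨p, ⟨hp, hpY⟩, rfl⟩
      refine ⟨⟨Or.inr ?_, (hY p hp).mpr hpY⟩, p, hp, rfl⟩
      rw [hrep_layer p (hparC p hp), hrep_layer c hc, hparlev p hp, hlev]
  rw [hCeq, hPeq, Finset.card_image_of_injOn, Finset.card_image_of_injOn]
  · intro p hp q hq h
    exact hrep_inj p (hparC p (Finset.mem_inter.mp hp).1) q
      (hparC q (Finset.mem_inter.mp hq).1) h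
  · intro d hd e he h
    exact hrep_inj d (hchC d (Finset.mem_inter.mp hd).1) e
      (hchC e (Finset.mem_inter.mp he).1) h
/-- in the feedback network built from a tree hierarchy with
threshold `τ = rk`, if `B` is presented at all times `≥ t`, every concept in
`supp_{r,f}(B)` has its rep fire at some time `≤ t + 2L`. -/
theorem fb_tree_time_bound {α ν : Type} [DecidableEq α] [DecidableEq ν] [Fintype ν]
    (H : ConceptHierarchy α) (hTree : H.IsTree) (rep : α → ν) (layer : ν → ℕ)
    (hrep_inj : ∀ c ∈ H.concepts, ∀ c' ∈ H.concepts, rep c = rep c' → c = c')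
    (hrep_layer : ∀ c ∈ H.concepts, layer (rep c) = H.level c)
    (r f : ℝ) (hr0 : 0 ≤ r) (hr1 : r ≤ 1) (hf : 0 ≤ f)
    (firing : ν → ℕ → Prop) (B : Finset α)
    (hB : ∀ b ∈ B, b ∈ H.concepts ∧ H.level b = 0) (t : ℕ)
    (hpres : ∀ u : ν, layer u = 0 → ∀ s : ℕ, t ≤ s → (firing u s ↔ ∃ b ∈ B, u = rep b))
    (hinit : ∀ u : ν, 1 ≤ layer u → ¬ firing u t)
    (hdyn : ∀ u : ν, 1 ≤ layer u → ∀ s : ℕ, (firing u (s + 1) ↔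
        r * H.k ≤ ∑ v ∈ Finset.univ.filter
            (fun v => (layer v + 1 = layer u ∨ layer v = layer u + 1) ∧ firing v s),
          fbWeight H rep f v u)) :
    ∀ c ∈ H.concepts, c ∈ H.suppFBSet r f B →
      ∃ s ≤ 2 * H.L, firing (rep c) (t + s) := by
  -- the firing ↔ support-set equivalence
  have key : ∀ s : ℕ, ∀ c ∈ H.concepts,
      (firing (rep c) (t + s) ↔ c ∈ H.suppFB r f B (H.level c) s) := by
    intro s
    induction s with
    | zero =>
      intro c hc
      match hl : H.level c with
      | 0 =>
        rw [Nat.add_zero, ConceptHierarchy.suppFB_zero,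
          hpres (rep c) (by rw [hrep_layer c hc, hl]) t le_rfl]
        constructor
        · rintro ⟨b, hb, hrb⟩
          rwa [hrep_inj c hc b (hB b hb).1 hrb]
        · intro hcB
          exact ⟨c, hcB, rfl⟩
      | (ℓ+1) =>
        rw [ConceptHierarchy.suppFB_succ_zero]
        simp only [Finset.notMem_empty, iff_false]
        exact hinit (rep c) (by rw [hrep_layer c hc, hl]; omega)
    | succ s ih =>
      intro c hc
      match hl : H.level c with
      | 0 =>
        rw [ConceptHierarchy.suppFB_zero,
          hpres (rep c) (by rw [hrep_layer c hc, hl]) (t + (s+1)) (by omega)]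
        constructor
        · rintro ⟨b, hb, hrb⟩
          rwa [hrep_inj c hc b (hB b hb).1 hrb]
        · intro hcB
          exact ⟨c, hcB, rfl⟩
      | (ℓ+1) =>
        have hdyn' := hdyn (rep c) (by rw [hrep_layer c hc, hl]; omega) (t + s)
        have hsum := fbWeight_sum H rep layer hrep_inj hrep_layer f
          (fun v => firing v (t + s)) c hc ℓ hl
          (H.suppFB r f B ℓ s) (H.suppFB r f B (ℓ+2) s)
          (fun d hd => by
            have hdC := H.children_mem c hc d hd
            have hdl : H.level d = ℓ := by
              have := H.children_level c hc d hd; omega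
            show firing (rep d) (t + s) ↔ _
            rw [ih d hdC, hdl])
          (fun p hp => by
            have hpC : p ∈ H.concepts := (Finset.mem_filter.mp hp).1
            have hpl : H.level p = ℓ + 2 := by
              have := H.children_level p hpC c (Finset.mem_filter.mp hp).2; omega
            show firing (rep p) (t + s) ↔ _
            rw [ih p hpC, hpl])
        have : t + (s + 1) = (t + s) + 1 := by omega
        rw [this, hdyn', hsum,
          H.mem_suppFB_succ_iff r f B hf ℓ c s]
        constructor
        · intro h; exact ⟨hc, hl, h⟩
        · intro h; exact h.2.2
  -- assemble
  intro c hcC hcS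
  obtain ⟨t₁, ht₁⟩ := Set.mem_iUnion.mp hcS
  obtain ⟨ℓ, hℓ⟩ := Set.mem_iUnion.mp ht₁
  rw [Finset.mem_coe] at hℓ
  match ℓ with
  | 0 =>
    rw [ConceptHierarchy.suppFB_zero] at hℓ
    refine ⟨0, by omega, ?_⟩
    rw [key 0 c hcC, (hB c hℓ).2, ConceptHierarchy.suppFB_zero]
    exact hℓ
  | (m+1) =>
    have hmem := H.mem_suppFB_level r f B hℓ
    have hstab := H.suppFB_stab r f B hTree hf hB t₁ m c hℓ
    have hmL : m + 1 ≤ H.L := hmem.2 ▸ H.level_le c hcC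
    refine ⟨2 * H.L - (m+1), by omega, ?_⟩
    rw [key _ c hcC, hmem.2]
    exact hstab
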